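/- Let σ₃ = diag(1, −1) ∈ M₂(ℂ). Let X ∈ M₂(ℂ) satisfy: trace X = 0; X† σ₃ + σ₃ X = 0; 2 · trace(X · X) = −1; and the real number Re(2 · trace(i • (X * σ₃))) is negative. Then there exists g ∈ M₂(ℂ) with det g = 1 and g† σ₃ g = σ₃ such that g · ((i/2) • σ₃) · g⁻¹ = X. -/

import Mathlib

/-- The Pauli matrix `σ₃ = diag(1, -1)`. -/
noncomputable def sigma3 : Matrix (Fin 2) (Fin 2) ℂ := !![1, 0; 0, -1]

set_option maxHeartbeats 2000000 in
theorem su11_acts_transitively_on_hyperbolic_plane (X : Matrix (Fin 2) (Fin 2) ℂ)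
    (htr : X.trace = 0)
    (hsu : X.conjTranspose * sigma3 + sigma3 * X = 0)
    (hnorm : 2 * (X * X).trace = -1)
    (hsheet : ((2 : ℂ) * (Complex.I • (X * sigma3)).trace).re < 0) :
    ∃ g : Matrix (Fin 2) (Fin 2) ℂ, g.det = 1 ∧
      g.conjTranspose * sigma3 * g = sigma3 ∧
      g * ((Complex.I / 2) • sigma3) * g⁻¹ = X := by
  set a := X 0 0 with ha_def
  set b := X 0 1 with hb_def
  set c := X 1 0 with hc_def
  set d := X 1 1 with hd_def
  have hX : X = !![a, b; c, d] := by
    rw [ha_def, hb_def, hc_def, hd_def]; exact Matrix.eta_fin_two X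
  rw [hX] at htr hsu hnorm hsheet ⊢
  have hd : d = -a := by
    have h : a + d = 0 := by simpa [Matrix.trace_fin_two] using htr
    linear_combination h
  have h00 : star a + a = 0 := by
    have := congrFun (congrFun hsu 0) 0
    simpa [sigma3, Matrix.mul_apply, Fin.sum_univ_succ, Matrix.conjTranspose_apply] using this
  have hc : c = starRingEnd ℂ b := by
    have h := congrFun (congrFun hsu 1) 0
    simp [sigma3, Matrix.mul_apply, Fin.sum_univ_succ, Matrix.conjTranspose_apply] at h
    linear_combination -h
  set t := a.im with ht_def
  have ha : a = (t : ℂ) * Complex.I := by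
    have hre : a.re = 0 := by
      have := congrArg Complex.re h00
      simp [Complex.add_re] at this
      linarith [this]
    apply Complex.ext <;> simp [hre, ht_def]
  have htpos : 0 < t := by
    simp [sigma3, Matrix.trace_fin_two, Matrix.mul_apply, Fin.sum_univ_succ, hd, ha,
      Complex.mul_re, Complex.mul_im] at hsheet
    nlinarith [hsheet]
  have hI : Complex.I ^ 2 = -1 := Complex.I_sq
  have hbb : b * starRingEnd ℂ b = (t : ℂ)^2 - 1/4 := by
    have h : 2 * (a*a + b*c + (c*b + d*d)) = -1 := by
      simpa [Matrix.trace_fin_two, Matrix.mul_apply, Fin.sum_univ_succ] using hnorm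
    rw [hd, hc, ha] at h
    linear_combination h/4 - (t:ℂ)^2 * hI
  have hns : Complex.normSq b = t^2 - 1/4 := by
    have h2 : ((Complex.normSq b : ℝ) : ℂ) = ((t^2 - 1/4 : ℝ) : ℂ) := by
      push_cast
      rw [← Complex.mul_conj]; exact hbb
    exact Complex.ofReal_injective h2
  have ht : (1:ℝ)/2 ≤ t := by
    nlinarith [Complex.normSq_nonneg b, hns]
  set α : ℂ := (Real.sqrt (t + 1/2) : ℂ) with hα_def
  have hα2 : α ^ 2 = (t : ℂ) + 1/2 := by
    rw [hα_def, ← Complex.ofReal_pow, Real.sq_sqrt (by linarith : (0:ℝ) ≤ t + 1/2)]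
    push_cast; ring
  have hα0 : α ≠ 0 := by
    rw [hα_def, Ne, Complex.ofReal_eq_zero]
    exact Real.sqrt_ne_zero'.mpr (by linarith)
  set β : ℂ := Complex.I * b / α with hβ_def
  set bc := starRingEnd ℂ b with hbc_def
  have hβc : starRingEnd ℂ β = -Complex.I * bc / α := by
    rw [hβ_def, hα_def, hbc_def]
    simp [map_div₀, map_mul, Complex.conj_I, Complex.conj_ofReal]
  set g : Matrix (Fin 2) (Fin 2) ℂ := !![α, β; starRingEnd ℂ β, α] with hg_def
  have hdet : g.det = 1 := by
    rw [hg_def, Matrix.det_fin_two_of, hβc, hβ_def]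
    field_simp
    linear_combination (α^2+(t:ℂ)-1/2)*hα2 + (b*bc)*hI - hbb
  have hct : g.conjTranspose = g := by
    rw [hg_def]
    ext i j
    fin_cases i <;> fin_cases j <;>
      simp [Matrix.conjTranspose_apply, hβc, hβ_def, hα_def, Complex.conj_ofReal,
        map_div₀, map_mul, Complex.conj_I]
  set g' : Matrix (Fin 2) (Fin 2) ℂ := !![α, -β; -(starRingEnd ℂ β), α] with hg'_def
  have hright : g * g' = 1 := by
    rw [hg_def, hg'_def, Matrix.mul_fin_two, Matrix.one_fin_two]
    rw [hβc, hβ_def]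
    ext i j
    fin_cases i <;> fin_cases j <;> simp <;> field_simp <;> first
      | linear_combination hbb
      | linear_combination (α^2+(t:ℂ)-1/2)*hα2 + (b*bc)*hI - hbb
      | linear_combination (1/2-(t:ℂ)-α^2)*hα2 - (b*bc)*hI + hbb
      | ring
  have hginv : g⁻¹ = g' := Matrix.inv_eq_right_inv hright
  have hsm : (Complex.I / 2) • sigma3 = !![Complex.I/2, 0; 0, -(Complex.I/2)] := by
    rw [sigma3]
    ext i j; fin_cases i <;> fin_cases j <;> simp
  refine ⟨g, hdet, ?_, ?_⟩
  · rw [hct, hg_def, sigma3, Matrix.mul_fin_two, Matrix.mul_fin_two]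
    rw [hβc, hβ_def]
    ext i j
    fin_cases i <;> fin_cases j <;> simp <;> field_simp <;> first
      | linear_combination hbb
      | linear_combination (α^2+(t:ℂ)-1/2)*hα2 + (b*bc)*hI - hbb
      | linear_combination (1/2-(t:ℂ)-α^2)*hα2 - (b*bc)*hI + hbb
      | ring
  · rw [hginv, hsm, hg_def, hg'_def, Matrix.mul_fin_two, Matrix.mul_fin_two]
    rw [hβc, hβ_def]
    ext i j
    fin_cases i <;> fin_cases j <;>
      simp only [Matrix.cons_val', Matrix.cons_val_zero, Matrix.cons_val_one, Matrix.head_cons,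
        Matrix.empty_val', Matrix.cons_val_fin_one, Matrix.head_fin_const, Matrix.of_apply,
          Fin.zero_eta, Fin.mk_one, Fin.isValue] <;>
      field_simp <;> first
      | linear_combination hbb
      | linear_combination (α^2+(t:ℂ)-1/2)*hα2 + (b*bc)*hI - hbb
      | linear_combination (1/2-(t:ℂ)-α^2)*hα2 - (b*bc)*hI + hbb
      | linear_combination (-2*a + Complex.I/2 + Complex.I*(t:ℂ) + α^2*Complex.I)*hα2 + (-Complex.I*b*bc)*hI + Complex.I*hbb + (-1-2*(t:ℂ))*ha
      | linear_combination (-2*b*α^2)*hI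
      | linear_combination (-2*α^2*bc)*hI + (-2*α^2)*hc
      | linear_combination (-2*d - Complex.I/2 - Complex.I*(t:ℂ) - α^2*Complex.I)*hα2 + (Complex.I*b*bc)*hI + (-Complex.I)*hbb + (1+2*(t:ℂ))*ha + (-1-2*(t:ℂ))*hd
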